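/- Let q be a power of an odd prime. For any multiplicative characters A, B₂, C of 𝔽_q^×, any λ₁ ∈ 𝔽_q with λ₁ ≠ 0, and any λ₂ ∈ 𝔽_q, ℙ_D^{(2)}[A; ε, B₂; C; λ₁, λ₂] = ℙ_D^{(1)}[A; B₂; C; λ₂] − (B₂·C̄)(λ₁)·(Ā·C)(λ₁−1)·B̄₂(λ₁−λ₂). -/

import Mathlib

open Finset

/-- Jacobi sum `J(A,B) = Σ_x A(x) B(1-x)`. -/
noncomputable def jacobiSum' {F : Type} [Field F] [Fintype F] (A B : MulChar F ℂ) : ℂ :=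
  ∑ x : F, A x * B (1 - x)

/-- One-variable finite-field period function `ℙ_D^{(1)}[A; B; C; λ]`. -/
noncomputable def P1 {F : Type} [Field F] [Fintype F] (A B C : MulChar F ℂ) (l : F) : ℂ :=
  ∑ y : F, A y * (C * A⁻¹) (1 - y) * B⁻¹ (1 - l * y)

/-- Two-variable finite-field Appell–Lauricella period function `ℙ_D^{(2)}`. -/
noncomputable def P2 {F : Type} [Field F] [Fintype F] (A B₁ B₂ C : MulChar F ℂ) (l₁ l₂ : F) : ℂ :=
  ∑ y : F, A y * (C * A⁻¹) (1 - y) * B₁⁻¹ (1 - l₁ * y) * B₂⁻¹ (1 - l₂ * y)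

/-- n-variable finite-field Appell–Lauricella period function `ℙ_D^{(n)}`. -/
noncomputable def PDn {F : Type} [Field F] [Fintype F] (n : ℕ) (A : MulChar F ℂ)
    (B : Fin n → MulChar F ℂ) (C : MulChar F ℂ) (l : Fin n → F) : ℂ :=
  ∑ y : F, A y * (C * A⁻¹) (1 - y) * ∏ i, (B i)⁻¹ (1 - l i * y)

/-- Normalized two-variable Appell–Lauricella function `𝔽_D^{(2)}`. -/
noncomputable def F2 {F : Type} [Field F] [Fintype F] (A B₁ B₂ C : MulChar F ℂ) (l₁ l₂ : F) : ℂ :=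
  P2 A B₁ B₂ C l₁ l₂ / jacobiSum' A (C * A⁻¹)

/-- Normalized n-variable Appell–Lauricella function `𝔽_D^{(n)}`. -/
noncomputable def FDn {F : Type} [Field F] [Fintype F] (n : ℕ) (A : MulChar F ℂ)
    (B : Fin n → MulChar F ℂ) (C : MulChar F ℂ) (l : Fin n → F) : ℂ :=
  PDn n A B C l / jacobiSum' A (C * A⁻¹)

/-- Finite-field Gauss hypergeometric function `₂𝔽₁[A,B;C;λ] = ℙ_D^{(1)}[B;A;C;λ]/J(B,C B̄)`. -/
noncomputable def twoF1 {F : Type} [Field F] [Fintype F] (A B C : MulChar F ℂ) (l : F) : ℂ :=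
  P1 B A C l / jacobiSum' B (C * B⁻¹)

open scoped Classical in
/-- `δ(x) = 1` if `x = 0`, else `0`. -/
noncomputable def deltaC {F : Type} [Field F] [Fintype F] (x : F) : ℂ :=
  if x = 0 then 1 else 0

noncomputable instance {F : Type} [Field F] [Fintype F] : Fintype (MulChar F ℂ) :=
  Fintype.ofFinite _

/-- Character binomial coefficient `(A choose χ) = -χ(-1) J(A, χ̄)`. -/
noncomputable def charBinom {F : Type} [Field F] [Fintype F] (A χ : MulChar F ℂ) : ℂ :=
  -χ (-1) * jacobiSum' A χ⁻¹

/-- reduction of `ℙ_D^{(2)}` when `B₁ = ε`. -/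
theorem statement_14 (F : Type) [Field F] [Fintype F] (hq : Odd (Fintype.card F))
    (A B₂ C : MulChar F ℂ) (l₁ l₂ : F) (hl₁ : l₁ ≠ 0) :
    P2 A 1 B₂ C l₁ l₂ =
      P1 A B₂ C l₂ -
        (B₂ * C⁻¹) l₁ * (A⁻¹ * C) (l₁ - 1) * B₂⁻¹ (l₁ - l₂) := by
  classical
  have hsplit : P2 A 1 B₂ C l₁ l₂ =
      P1 A B₂ C l₂ -
        (A l₁⁻¹ * (C * A⁻¹) (1 - l₁⁻¹) * B₂⁻¹ (1 - l₂ * l₁⁻¹)) := by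
    unfold P2 P1
    have : ∀ y : F,
        A y * (C * A⁻¹) (1 - y) * (1 : MulChar F ℂ)⁻¹ (1 - l₁ * y) * B₂⁻¹ (1 - l₂ * y)
        = A y * (C * A⁻¹) (1 - y) * B₂⁻¹ (1 - l₂ * y) -
          (if y = l₁⁻¹ then A y * (C * A⁻¹) (1 - y) * B₂⁻¹ (1 - l₂ * y) else 0) := by
      intro y
      by_cases hy : y = l₁⁻¹
      · subst hy
        have h0 : (1 : F) - l₁ * l₁⁻¹ = 0 := by rw [mul_inv_cancel₀ hl₁, sub_self]
        rw [h0]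
        simp [MulChar.map_zero]
      · have h0 : (1 : F) - l₁ * y ≠ 0 := by
          intro h
          apply hy
          field_simp at h ⊢
          linear_combination -h
        rw [inv_one, MulChar.one_apply (isUnit_iff_ne_zero.mpr h0)]
        simp [hy]
    simp_rw [this, Finset.sum_sub_distrib, Finset.sum_ite_eq' Finset.univ]
    simp
  rw [hsplit]
  congr 1
  have hone : ∀ χ : MulChar F ℂ, χ l₁⁻¹ * χ l₁ = 1 := by
    intro χ
    rw [← map_mul, inv_mul_cancel₀ hl₁, map_one]
  have hne : ∀ χ : MulChar F ℂ, χ l₁ ≠ 0 := by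
    intro χ h
    have := hone χ
    rw [h, mul_zero] at this
    exact zero_ne_one this
  have hinv : ∀ χ : MulChar F ℂ, χ l₁⁻¹ = (χ l₁)⁻¹ := by
    intro χ
    exact eq_inv_of_mul_eq_one_left (hone χ)
  have hA := hne A
  have hB := hne B₂
  have hC := hne C
  have e1 : (1 : F) - l₁⁻¹ = (l₁ - 1) * l₁⁻¹ := by field_simp
  have e2 : (1 : F) - l₂ * l₁⁻¹ = (l₁ - l₂) * l₁⁻¹ := by field_simp
  rw [e1, e2]
  simp only [MulChar.mul_apply, MulChar.inv_apply_eq_inv', map_mul, hinv]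
  field_simp
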